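/- Gauge invariance of the n-field: with n₀, k₀ unit vectors, (n₀,k₀) = 0, ω₀ ∈ (0,π), n^i = n₀^i cos ω₀ + n₀^j k₀^k ε_{kj}^i sin ω₀, m = (n₀+n)/(2cos(ω₀/2)), k = k₀ cos φ + m sin φ for φ ∈ (−π/2,π/2), and ω ∈ (0,π) defined by cos ω = (cos ω₀ − cos²(ω₀/2) sin²φ)/(1 − cos²(ω₀/2) sin²φ), sin ω = sin ω₀ cos φ/(1 − cos²(ω₀/2) sin²φ), one has n₀^j S_j^i(ω, k) = n^i; i.e., the rotated vector is independent of φ. -/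

import Mathlib

open Matrix Real

/-- Levi-Civita tensor on `Fin 3`, with `eps 0 1 2 = 1`. -/
noncomputable def eps (i j l : Fin 3) : ℝ :=
  if (i = 0 ∧ j = 1 ∧ l = 2) ∨ (i = 1 ∧ j = 2 ∧ l = 0) ∨ (i = 2 ∧ j = 0 ∧ l = 1) then 1
  else if (i = 0 ∧ j = 2 ∧ l = 1) ∨ (i = 2 ∧ j = 1 ∧ l = 0) ∨ (i = 1 ∧ j = 0 ∧ l = 2) then -1
  else 0

/-- Rotation matrix `S_i{}^j = δ_i^j cos ω + k^l ε_{li}{}^j sin ω + k_i k^j (1 - cos ω)`. -/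
noncomputable def rot (ω : ℝ) (k : Fin 3 → ℝ) : Matrix (Fin 3) (Fin 3) ℝ :=
  Matrix.of fun i j : Fin 3 =>
    (if i = j then Real.cos ω else 0) + (∑ l, k l * eps l i j) * Real.sin ω
      + k i * k j * (1 - Real.cos ω)

theorem gauge_invariance_of_n (n₀ k₀ : Fin 3 → ℝ)
    (hn₀ : ∑ i, n₀ i * n₀ i = 1) (hk₀ : ∑ i, k₀ i * k₀ i = 1)
    (horth : ∑ i, n₀ i * k₀ i = 0)
    (ω₀ : ℝ) (hω₀ : ω₀ ∈ Set.Ioo 0 Real.pi)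
    (φ : ℝ) (hφ : φ ∈ Set.Ioo (-(Real.pi / 2)) (Real.pi / 2))
    (n : Fin 3 → ℝ)
    (hn : ∀ i, n i = n₀ i * Real.cos ω₀ + (∑ j, ∑ l, n₀ j * k₀ l * eps l j i) * Real.sin ω₀)
    (m : Fin 3 → ℝ) (hm : ∀ i, m i = (n₀ i + n i) / (2 * Real.cos (ω₀ / 2)))
    (k : Fin 3 → ℝ) (hk : ∀ i, k i = k₀ i * Real.cos φ + m i * Real.sin φ)
    (ω : ℝ) (hω : ω ∈ Set.Ioo 0 Real.pi)
    (hcosω : Real.cos ω = (Real.cos ω₀ - Real.cos (ω₀ / 2) ^ 2 * Real.sin φ ^ 2) /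
      (1 - Real.cos (ω₀ / 2) ^ 2 * Real.sin φ ^ 2))
    (hsinω : Real.sin ω = Real.sin ω₀ * Real.cos φ /
      (1 - Real.cos (ω₀ / 2) ^ 2 * Real.sin φ ^ 2)) :
    Matrix.vecMul n₀ (rot ω k) = n := by
  obtain ⟨hω₀0, hω₀π⟩ := hω₀
  obtain ⟨hφ0, hφπ⟩ := hφ
  -- basic positivity
  have hh : 0 < Real.cos (ω₀ / 2) := by
    apply Real.cos_pos_of_mem_Ioo
    constructor <;> [linarith [Real.pi_pos]; linarith]
  have hcφ : 0 < Real.cos φ := Real.cos_pos_of_mem_Ioo ⟨hφ0, hφπ⟩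
  have hpyφ : Real.sin φ ^ 2 + Real.cos φ ^ 2 = 1 := Real.sin_sq_add_cos_sq φ
  have hpyh : Real.sin (ω₀ / 2) ^ 2 + Real.cos (ω₀ / 2) ^ 2 = 1 := Real.sin_sq_add_cos_sq _
  have hD : 0 < 1 - Real.cos (ω₀ / 2) ^ 2 * Real.sin φ ^ 2 := by nlinarith [sq_nonneg (Real.sin (ω₀/2) * Real.sin φ)]
  have hD' : (1 - Real.cos (ω₀ / 2) ^ 2 * Real.sin φ ^ 2) ≠ 0 := ne_of_gt hD
  -- half angle facts
  have hc0 : Real.cos ω₀ = 2 * Real.cos (ω₀ / 2) ^ 2 - 1 := by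
    have h2 := Real.cos_sq (ω₀ / 2)
    rw [show 2 * (ω₀ / 2) = ω₀ by ring] at h2
    linarith
  have hs0 : Real.sin ω₀ = 2 * Real.sin (ω₀ / 2) * Real.cos (ω₀ / 2) := by
    have := Real.sin_two_mul (ω₀ / 2)
    rw [show 2 * (ω₀ / 2) = ω₀ by ring] at this
    linarith
  -- expanded constraints
  have hn₀' : n₀ 0 * n₀ 0 + n₀ 1 * n₀ 1 + n₀ 2 * n₀ 2 = 1 := by
    simpa [Fin.sum_univ_three] using hn₀
  have hk₀' : k₀ 0 * k₀ 0 + k₀ 1 * k₀ 1 + k₀ 2 * k₀ 2 = 1 := by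
    simpa [Fin.sum_univ_three] using hk₀
  have horth' : n₀ 0 * k₀ 0 + n₀ 1 * k₀ 1 + n₀ 2 * k₀ 2 = 0 := by
    simpa [Fin.sum_univ_three] using horth
  -- the cross-product vector w = k₀ × n₀
  set w : Fin 3 → ℝ := fun i => ∑ j, ∑ l, n₀ j * k₀ l * eps l j i with hw
  have hw0 : w 0 = n₀ 2 * k₀ 1 - n₀ 1 * k₀ 2 := by
    simp [hw, Fin.sum_univ_three, eps]; ring
  have hw1 : w 1 = n₀ 0 * k₀ 2 - n₀ 2 * k₀ 0 := by
    simp [hw, Fin.sum_univ_three, eps]; ring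
  have hw2 : w 2 = n₀ 1 * k₀ 0 - n₀ 0 * k₀ 1 := by
    simp [hw, Fin.sum_univ_three, eps]; ring
  have hn' : ∀ i, n i = n₀ i * Real.cos ω₀ + w i * Real.sin ω₀ := fun i => hn i
  -- m = h n₀ + g w
  have hmw : ∀ i, m i = Real.cos (ω₀ / 2) * n₀ i + Real.sin (ω₀ / 2) * w i := by
    intro i
    rw [hm i, hn' i, hc0, hs0]
    field_simp
    ring
  have hk' : ∀ i, k i = Real.cos φ * k₀ i +
      Real.sin φ * (Real.cos (ω₀ / 2) * n₀ i + Real.sin (ω₀ / 2) * w i) := by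
    intro i; rw [hk i, hmw i]; ring
  -- n₀ · k = h sin φ
  have hnk : ∑ j, n₀ j * k j = Real.cos (ω₀ / 2) * Real.sin φ := by
    simp only [Fin.sum_univ_three, hk' 0, hk' 1, hk' 2, hw0, hw1, hw2]
    linear_combination Real.cos φ * horth' + Real.sin φ * Real.cos (ω₀ / 2) * hn₀'
  -- the cross term
  have hX : ∀ i, (∑ j, n₀ j * (∑ l, k l * eps l j i)) =
      Real.cos φ * w i - Real.sin φ * Real.sin (ω₀ / 2) * k₀ i := by
    have h0 : (∑ j, n₀ j * (∑ l, k l * eps l j (0 : Fin 3))) =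
        Real.cos φ * w 0 - Real.sin φ * Real.sin (ω₀ / 2) * k₀ 0 := by
      simp only [Fin.sum_univ_three, hk' 0, hk' 1, hk' 2, hw0, hw1, hw2]
      simp [eps]
      linear_combination (Real.sin φ * Real.sin (ω₀/2) * n₀ 0) * horth'
          - (Real.sin φ * Real.sin (ω₀/2) * k₀ 0) * hn₀'
    have h1 : (∑ j, n₀ j * (∑ l, k l * eps l j (1 : Fin 3))) =
        Real.cos φ * w 1 - Real.sin φ * Real.sin (ω₀ / 2) * k₀ 1 := by
      simp only [Fin.sum_univ_three, hk' 0, hk' 1, hk' 2, hw0, hw1, hw2]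
      simp [eps]
      linear_combination (Real.sin φ * Real.sin (ω₀/2) * n₀ 1) * horth'
          - (Real.sin φ * Real.sin (ω₀/2) * k₀ 1) * hn₀'
    have h2 : (∑ j, n₀ j * (∑ l, k l * eps l j (2 : Fin 3))) =
        Real.cos φ * w 2 - Real.sin φ * Real.sin (ω₀ / 2) * k₀ 2 := by
      simp only [Fin.sum_univ_three, hk' 0, hk' 1, hk' 2, hw0, hw1, hw2]
      simp [eps]
      linear_combination (Real.sin φ * Real.sin (ω₀/2) * n₀ 2) * horth'
          - (Real.sin φ * Real.sin (ω₀/2) * k₀ 2) * hn₀'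
    intro i
    fin_cases i
    · exact h0
    · exact h1
    · exact h2
  -- three scalar identities
  have hA : Real.cos ω + Real.cos (ω₀/2) ^ 2 * Real.sin φ ^ 2 * (1 - Real.cos ω)
      = Real.cos ω₀ := by
    rw [hcosω]; field_simp; ring
  have hB : Real.sin ω * Real.cos φ
      + Real.sin (ω₀/2) * Real.cos (ω₀/2) * Real.sin φ ^ 2 * (1 - Real.cos ω)
      = Real.sin ω₀ := by
    rw [hsinω, hcosω, hc0, hs0]
    field_simp
    linear_combination (2 * Real.sin (ω₀/2)) * hpyφ
  have hC : -(Real.sin ω * Real.sin (ω₀/2) * Real.sin φ)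
      + Real.cos (ω₀/2) * Real.sin φ * Real.cos φ * (1 - Real.cos ω) = 0 := by
    rw [hsinω, hcosω, hc0, hs0]
    field_simp
    linear_combination (- 2 * Real.cos (ω₀/2) * Real.sin φ * Real.cos φ) * hpyh
  -- finish componentwise
  funext i
  have hexp : Matrix.vecMul n₀ (rot ω k) i
      = n₀ i * Real.cos ω + (∑ j, n₀ j * (∑ l, k l * eps l j i)) * Real.sin ω
        + (∑ j, n₀ j * k j) * (k i * (1 - Real.cos ω)) := by
    fin_cases i <;>
      · simp [Matrix.vecMul, dotProduct, rot, Fin.sum_univ_three, eps]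
        ring
  rw [hexp, hX i, hnk, hk' i, hn' i]
  linear_combination n₀ i * hA + w i * hB + k₀ i * hC
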